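/- Let T be an (A,(m,n))-isosymmetric operator with n even and I_A^m(T) ≥ 0. Then T is (A,(m,n−1))-isosymmetric. -/

import Mathlib

open ContinuousLinearMap

noncomputable def SOp {H : Type*} [NormedAddCommGroup H] [InnerProductSpace ℂ H]
    [CompleteSpace H] (A T : H →L[ℂ] H) (n : ℕ) : H →L[ℂ] H :=
  ∑ k ∈ Finset.range (n + 1),
    ((-1 : ℂ) ^ (n - k) * (n.choose k : ℂ)) • (((adjoint T) ^ k) ∘L A ∘L (T ^ (n - k)))

noncomputable def OmegaS {H : Type*} [NormedAddCommGroup H] [InnerProductSpace ℂ H]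
    [CompleteSpace H] (A T : H →L[ℂ] H) (m n : ℕ) : H →L[ℂ] H :=
  ∑ k ∈ Finset.range (m + 1),
    ((-1 : ℂ) ^ (m - k) * (m.choose k : ℂ)) • (((adjoint T) ^ k) ∘L SOp A T n ∘L (T ^ k))

noncomputable def IOp {H : Type*} [NormedAddCommGroup H] [InnerProductSpace ℂ H]
    [CompleteSpace H] (A T : H →L[ℂ] H) (m : ℕ) : H →L[ℂ] H :=
  ∑ j ∈ Finset.range (m + 1),
    ((-1 : ℂ) ^ (m - j) * (m.choose j : ℂ)) • (((adjoint T) ^ j) ∘L A ∘L (T ^ j))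

section Aux

open NormedSpace Filter Topology

variable {H : Type*} [NormedAddCommGroup H] [InnerProductSpace ℂ H] [CompleteSpace H]

private lemma sandwich (A T : H →L[ℂ] H) (a b c d : ℕ) :
    ((adjoint T)^a) ∘L (((adjoint T)^b) ∘L A ∘L (T^c)) ∘L (T^d)
      = ((adjoint T)^(a+b)) ∘L A ∘L (T^(c+d)) := by
  simp only [pow_add]
  ext x; simp [comp_apply]

private lemma omega_eq (A T : H →L[ℂ] H) (m n : ℕ) :
    OmegaS A T m n = SOp (IOp A T m) T n := by
  unfold OmegaS SOp IOp
  simp only [comp_finset_sum, finset_sum_comp, comp_smulₛₗ, smul_comp, RingHom.id_apply,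
    Finset.smul_sum, smul_smul, sandwich]
  rw [Finset.sum_comm]
  refine Finset.sum_congr rfl fun j hj => Finset.sum_congr rfl fun k hk => ?_
  rw [add_comm (n - j) k]
  ring_nf

private lemma SOp_succ (B T : H →L[ℂ] H) (h : ℕ) :
    SOp B T (h+1) = (adjoint T) ∘L SOp B T h - SOp B T h ∘L T := by
  have hcomp : adjoint T ∘L SOp B T h = ∑ j ∈ Finset.range (h+1),
      ((-1 : ℂ) ^ (h - j) * (h.choose j : ℂ)) •
        (((adjoint T) ^ (j+1)) ∘L B ∘L (T ^ (h - j))) := by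
    unfold SOp
    rw [comp_finset_sum]
    refine Finset.sum_congr rfl fun j hj => ?_
    rw [comp_smulₛₗ, RingHom.id_apply]
    congr 1
    ext x
    simp [comp_apply, pow_succ']
  have hcomp2 : SOp B T h ∘L T = ∑ j ∈ Finset.range (h+1),
      ((-1 : ℂ) ^ (h - j) * (h.choose j : ℂ)) •
        (((adjoint T) ^ j) ∘L B ∘L (T ^ (h + 1 - j))) := by
    unfold SOp
    rw [finset_sum_comp]
    refine Finset.sum_congr rfl fun j hj => ?_
    rw [Finset.mem_range] at hj
    have : h + 1 - j = (h - j) + 1 := by omega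
    rw [smul_comp, this]
    congr 1
  rw [hcomp, hcomp2]
  unfold SOp
  rw [Finset.sum_range_succ' _ (h+1)]
  have key : ∀ j ∈ Finset.range (h+1),
      ((-1 : ℂ) ^ (h + 1 - (j+1)) * ((h+1).choose (j+1) : ℂ)) •
        (((adjoint T) ^ (j+1)) ∘L B ∘L (T ^ (h + 1 - (j+1))))
      = ((-1 : ℂ) ^ (h - j) * (h.choose j : ℂ)) •
          (((adjoint T) ^ (j+1)) ∘L B ∘L (T ^ (h - j)))
        + ((-1 : ℂ) ^ (h - j) * (h.choose (j+1) : ℂ)) •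
          (((adjoint T) ^ (j+1)) ∘L B ∘L (T ^ (h - j))) := by
    intro j hj
    have : h + 1 - (j+1) = h - j := by omega
    rw [this, Nat.choose_succ_succ, Nat.cast_add, mul_add, add_smul]
  rw [Finset.sum_congr rfl key, Finset.sum_add_distrib]
  have last : ∑ j ∈ Finset.range (h+1),
      ((-1 : ℂ) ^ (h - j) * (h.choose (j+1) : ℂ)) •
        (((adjoint T) ^ (j+1)) ∘L B ∘L (T ^ (h - j)))
      + ((-1 : ℂ) ^ (h + 1 - 0) * ((h+1).choose 0 : ℂ)) •
        (((adjoint T) ^ 0) ∘L B ∘L (T ^ (h + 1 - 0)))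
      = - ∑ j ∈ Finset.range (h+1),
          ((-1 : ℂ) ^ (h - j) * (h.choose j : ℂ)) •
            (((adjoint T) ^ j) ∘L B ∘L (T ^ (h + 1 - j))) := by
    rw [Finset.sum_range_succ' (fun j => ((-1 : ℂ) ^ (h - j) * (h.choose j : ℂ)) •
          (((adjoint T) ^ j) ∘L B ∘L (T ^ (h + 1 - j)))) h]
    rw [Finset.sum_range_succ (fun j => ((-1 : ℂ) ^ (h - j) * (h.choose (j+1) : ℂ)) •
          (((adjoint T) ^ (j+1)) ∘L B ∘L (T ^ (h - j)))) h]
    rw [neg_add]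
    congr 1
    · rw [Nat.choose_eq_zero_of_lt (by omega), ← Finset.sum_neg_distrib]
      simp only [Nat.cast_zero, mul_zero, zero_smul, add_zero]
      refine Finset.sum_congr rfl fun j hj => ?_
      rw [Finset.mem_range] at hj
      have h1 : h - j = (h - (j+1)) + 1 := by omega
      have h2 : h + 1 - (j + 1) = h - j := by omega
      rw [h2, ← neg_smul]
      congr 1
      rw [h1, pow_succ]
      ring
    · simp only [Nat.choose_zero_right, Nat.cast_one, mul_one, Nat.sub_zero, pow_zero,
        Nat.choose_self, Nat.cast_ofNat]
      rw [← neg_smul]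
      congr 1
      rw [pow_succ]
      ring
  rw [add_assoc, last, sub_eq_add_neg]

private lemma SOp_zero_of_ge (B T : H →L[ℂ] H) (n : ℕ) (h0 : SOp B T n = 0) :
    ∀ h, n ≤ h → SOp B T h = 0 := by
  intro h hh
  induction h, hh using Nat.le_induction with
  | base => exact h0
  | succ k hk ih => rw [SOp_succ, ih]; simp

private lemma exp_expand (B T : H →L[ℂ] H) (n : ℕ) (hS : ∀ h, n ≤ h → SOp B T h = 0) (s : ℝ) :
    adjoint (exp ((Complex.I * s) • T)) * B * exp ((Complex.I * s) • T)
      = ∑ h ∈ Finset.range n,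
          ((-(Complex.I * s)) ^ h * ((h.factorial : ℂ))⁻¹) • SOp B T h := by
  set c : ℂ := Complex.I * s with hc
  clear_value c
  have hstar : adjoint (exp (c • T)) = exp ((-c) • adjoint T) := by
    rw [← star_eq_adjoint, star_exp]
    congr 1
    rw [star_smul, star_eq_adjoint]
    congr 1
    simp [hc, Complex.ext_iff]
  rw [hstar]
  set x : ℕ → (H →L[ℂ] H) := fun a => (a.factorial : ℂ)⁻¹ • ((-c) • adjoint T) ^ a with hx
  set y : ℕ → (H →L[ℂ] H) := fun b => (b.factorial : ℂ)⁻¹ • (c • T) ^ b with hy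
  have hex : exp ((-c) • adjoint T) = ∑' a, x a := by rw [exp_eq_tsum ℂ]
  have hey : exp (c • T) = ∑' b, y b := by rw [exp_eq_tsum ℂ]
  rw [hex, hey]
  have hxB : (∑' a, x a) * B = ∑' a, (x a * B) := by
    exact (((ContinuousLinearMap.mul ℂ (H →L[ℂ] H)).flip B).map_tsum
      (expSeries_summable' (𝕂 := ℂ) ((-c) • adjoint T)))
  rw [hxB]
  have hnx : Summable fun a => ‖x a * B‖ := by
    apply Summable.of_nonneg_of_le (fun a => norm_nonneg _)
      (fun a => norm_mul_le (x a) B)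
    exact (norm_expSeries_summable' (𝕂 := ℂ) ((-c) • adjoint T)).mul_right ‖B‖
  have hny : Summable fun b => ‖y b‖ := norm_expSeries_summable' (𝕂 := ℂ) (c • T)
  rw [tsum_mul_tsum_eq_tsum_sum_antidiagonal_of_summable_norm hnx hny]
  have hterm : ∀ h : ℕ, ∑ kl ∈ Finset.HasAntidiagonal.antidiagonal h, (x kl.1 * B) * y kl.2
      = ((-c) ^ h * ((h.factorial : ℂ))⁻¹) • SOp B T h := by
    intro h
    rw [Finset.Nat.sum_antidiagonal_eq_sum_range_succ_mk]
    simp only [hx, hy]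
    unfold SOp
    rw [Finset.smul_sum]
    refine Finset.sum_congr rfl fun k hk => ?_
    rw [Finset.mem_range] at hk
    have hkh : k ≤ h := Nat.lt_succ_iff.mp hk
    simp only [smul_pow, smul_mul_assoc, mul_smul_comm, smul_smul, mul_def]
    rw [← comp_assoc]
    congr 1
    have hfact : (h.factorial : ℂ) = (h.choose k : ℂ) * k.factorial * (h - k).factorial := by
      exact_mod_cast congrArg Nat.cast (Nat.choose_mul_factorial_mul_factorial hkh).symm
    have hk0 : (k.factorial : ℂ) ≠ 0 := Nat.cast_ne_zero.mpr k.factorial_ne_zero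
    have hhk0 : ((h - k).factorial : ℂ) ≠ 0 := Nat.cast_ne_zero.mpr (h - k).factorial_ne_zero
    have hh0 : (h.factorial : ℂ) ≠ 0 := Nat.cast_ne_zero.mpr h.factorial_ne_zero
    have hpow : c ^ k * c ^ (h - k) = c ^ h := by rw [← pow_add]; congr 1; omega
    have hsign : (-1 : ℂ) ^ h * (-1 : ℂ) ^ (h - k) = (-1 : ℂ) ^ k := by
      rw [← pow_add]
      have : h + (h - k) = k + 2 * (h - k) := by omega
      rw [this, pow_add, pow_mul]
      simp
    field_simp
    rw [hfact]
    ring_nf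
    linear_combination ((h.choose k : ℂ) * k.factorial * (h - k).factorial * (-1:ℂ)^k) * hpow
      - ((h.choose k : ℂ) * k.factorial * (h - k).factorial * c^h) * hsign
  rw [tsum_congr hterm]
  rw [tsum_eq_sum (s := Finset.range n) (fun h hh => by
    rw [hS h (by simpa using hh), smul_zero])]

private lemma top_coeff_nonneg (d : ℕ) (a : ℕ → ℝ)
    (hnn : ∀ᶠ s : ℝ in atTop, 0 ≤ ∑ h ∈ Finset.range (d+1), a h * s ^ h) : 0 ≤ a d := by
  have hT : Tendsto (fun s : ℝ => (∑ h ∈ Finset.range (d+1), a h * s ^ h) / s ^ d)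
      atTop (𝓝 (a d)) := by
    have h1 : ∀ᶠ s : ℝ in atTop, (∑ h ∈ Finset.range (d+1), a h * s ^ h) / s ^ d
        = ∑ h ∈ Finset.range (d+1), a h * s ^ h / s ^ d := by
      filter_upwards [eventually_gt_atTop (0:ℝ)] with s hs
      rw [Finset.sum_div]
    rw [tendsto_congr' h1]
    have h2 : ∀ h ∈ Finset.range (d+1),
        Tendsto (fun s : ℝ => a h * s ^ h / s ^ d) atTop
          (𝓝 (if h = d then a d else 0)) := by
      intro h hh
      rw [Finset.mem_range] at hh
      rcases eq_or_lt_of_le (Nat.lt_succ_iff.mp hh) with heq | hlt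
      · subst heq
        simp only [if_pos rfl]
        have : ∀ᶠ s : ℝ in atTop, a h * s ^ h / s ^ h = a h := by
          filter_upwards [eventually_gt_atTop (0:ℝ)] with s hs
          field_simp
        rw [tendsto_congr' this]
        exact tendsto_const_nhds
      · rw [if_neg (by omega)]
        have he : ∀ᶠ s : ℝ in atTop, a h * s ^ h / s ^ d = a h / s ^ (d - h) := by
          filter_upwards [eventually_gt_atTop (0:ℝ)] with s hs
          rw [eq_div_iff (pow_ne_zero _ (ne_of_gt hs)), div_mul_eq_mul_div,
            mul_assoc, ← pow_add]
          have hdh : h + (d - h) = d := by omega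
          rw [hdh, mul_div_assoc, div_self (pow_ne_zero _ (ne_of_gt hs)), mul_one]
        rw [tendsto_congr' he]
        have : Tendsto (fun s : ℝ => s ^ (d - h)) atTop atTop :=
          tendsto_pow_atTop (by omega)
        simpa using (tendsto_const_nhds (x := a h)).div_atTop this
    have := tendsto_finset_sum (Finset.range (d+1)) h2
    convert this using 2
    rw [Finset.sum_ite_eq' (Finset.range (d+1)) d (fun _ => a d)]
    simp
  refine ge_of_tendsto hT ?_
  filter_upwards [hnn, eventually_gt_atTop (0:ℝ)] with s h1 h2
  exact div_nonneg h1 (pow_nonneg h2.le d)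

end Aux

theorem isosymmetric_reduce_n {H : Type*} [NormedAddCommGroup H] [InnerProductSpace ℂ H]
    [CompleteSpace H] (A T : H →L[ℂ] H) (hA : A.IsPositive) (m n : ℕ)
    (hn_even : Even n) (hn : 2 ≤ n) (hI : (IOp A T m).IsPositive)
    (h : OmegaS A T m n = 0) : OmegaS A T m (n - 1) = 0 := by
  set B : H →L[ℂ] H := IOp A T m with hB
  have hSn : SOp B T n = 0 := by rw [← omega_eq]; exact h
  have hS : ∀ h, n ≤ h → SOp B T h = 0 := SOp_zero_of_ge B T n hSn
  rw [omega_eq]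
  -- it suffices that all quadratic forms vanish
  have hq : ∀ x : H, inner ℂ ((SOp B T (n-1)) x) x = (0 : ℂ) := by
    intro x
    set α : ℂ := inner ℂ ((SOp B T (n-1)) x) x with hα
    -- the polynomial values
    have hval : ∀ s : ℝ, ∑ h ∈ Finset.range n,
        ((Complex.I ^ h * ((h.factorial : ℂ))⁻¹ * inner ℂ ((SOp B T h) x) x) * (s:ℂ) ^ h)
        = inner ℂ (B ((NormedSpace.exp ((Complex.I * s) • T)) x))
            ((NormedSpace.exp ((Complex.I * s) • T)) x) := by
      intro s
      have hexp := exp_expand B T n hS s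
      have happ : (adjoint (NormedSpace.exp ((Complex.I * s) • T)) * B *
          NormedSpace.exp ((Complex.I * s) • T)) x
          = adjoint (NormedSpace.exp ((Complex.I * s) • T))
              (B ((NormedSpace.exp ((Complex.I * s) • T)) x)) := rfl
      calc ∑ h ∈ Finset.range n,
            ((Complex.I ^ h * ((h.factorial : ℂ))⁻¹ * inner ℂ ((SOp B T h) x) x) * (s:ℂ) ^ h)
          = inner ℂ ((∑ h ∈ Finset.range n,
              ((-(Complex.I * s)) ^ h * ((h.factorial : ℂ))⁻¹) • SOp B T h) x) x := by
            rw [ContinuousLinearMap.sum_apply, sum_inner]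
            refine Finset.sum_congr rfl fun k hk => ?_
            rw [ContinuousLinearMap.smul_apply, inner_smul_left]
            have hconj : (starRingEnd ℂ) ((-(Complex.I * (s:ℂ))) ^ k * ((k.factorial : ℂ))⁻¹)
                = (Complex.I * s) ^ k * ((k.factorial : ℂ))⁻¹ := by
              rw [map_mul, map_pow, map_neg, map_mul, Complex.conj_I, Complex.conj_ofReal,
                map_inv₀, Complex.conj_natCast]
              ring_nf
            rw [hconj, mul_pow]
            ring
        _ = inner ℂ ((adjoint (NormedSpace.exp ((Complex.I * s) • T)) * B *
              NormedSpace.exp ((Complex.I * s) • T)) x) x := by rw [hexp]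
        _ = inner ℂ (B ((NormedSpace.exp ((Complex.I * s) • T)) x))
              ((NormedSpace.exp ((Complex.I * s) • T)) x) := by
            rw [happ, adjoint_inner_left]
    -- positivity of the values
    have hpos : ∀ s : ℝ, ∃ z : ℂ, (∑ h ∈ Finset.range n,
        ((Complex.I ^ h * ((h.factorial : ℂ))⁻¹ * inner ℂ ((SOp B T h) x) x) * (s:ℂ) ^ h)) = z
        ∧ z.im = 0 ∧ 0 ≤ z.re := by
      intro s
      refine ⟨_, hval s, ?_, ?_⟩
      · have := (isPositive_iff_complex B).mp hI ((NormedSpace.exp ((Complex.I * s) • T)) x)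
        have h1 := this.1
        set w : ℂ := inner ℂ (B ((NormedSpace.exp ((Complex.I * s) • T)) x))
            ((NormedSpace.exp ((Complex.I * s) • T)) x)
        rw [← h1]
        simp
      · exact ((isPositive_iff_complex B).mp hI _).2
    -- define real coefficients
    set d : ℕ → ℂ := fun h => Complex.I ^ h * ((h.factorial : ℂ))⁻¹ * inner ℂ ((SOp B T h) x) x
      with hd
    have hre : ∀ s : ℝ, (∑ h ∈ Finset.range n, d h * (s:ℂ) ^ h).re
        = ∑ h ∈ Finset.range n, (d h).re * s ^ h := by
      intro s
      rw [Complex.re_sum]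
      refine Finset.sum_congr rfl fun k hk => ?_
      rw [← Complex.ofReal_pow, Complex.mul_re, Complex.ofReal_re, Complex.ofReal_im]
      ring
    have him : ∀ s : ℝ, (∑ h ∈ Finset.range n, d h * (s:ℂ) ^ h).im
        = ∑ h ∈ Finset.range n, (d h).im * s ^ h := by
      intro s
      rw [Complex.im_sum]
      refine Finset.sum_congr rfl fun k hk => ?_
      rw [← Complex.ofReal_pow, Complex.mul_im, Complex.ofReal_re, Complex.ofReal_im]
      ring
    have hn1 : n = (n - 1) + 1 := by omega
    have hodd : Odd (n - 1) := by
      rcases hn_even with ⟨t, ht⟩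
      exact ⟨t - 1, by omega⟩
    -- re part nonneg everywhere
    have hrenn : ∀ s : ℝ, 0 ≤ ∑ h ∈ Finset.range ((n-1)+1), (d h).re * s ^ h := by
      intro s
      obtain ⟨z, hz, hzim, hzre⟩ := hpos s
      rw [← hn1, ← hre s, hz]
      exact hzre
    have himz : ∀ s : ℝ, ∑ h ∈ Finset.range ((n-1)+1), (d h).im * s ^ h = 0 := by
      intro s
      obtain ⟨z, hz, hzim, hzre⟩ := hpos s
      rw [← hn1, ← him s, hz, hzim]
    have h1 : 0 ≤ (d (n-1)).re :=
      top_coeff_nonneg (n-1) (fun h => (d h).re) (Filter.Eventually.of_forall hrenn)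
    have h2 : 0 ≤ -(d (n-1)).re := by
      have := top_coeff_nonneg (n-1) (fun h => (-1 : ℝ)^h * (d h).re) ?_
      · rwa [hodd.neg_one_pow, neg_one_mul] at this
      refine Filter.Eventually.of_forall fun s => ?_
      have := hrenn (-s)
      convert this using 1
      refine Finset.sum_congr rfl fun k hk => ?_
      rw [neg_pow]
      ring
    have h3 : 0 ≤ (d (n-1)).im :=
      top_coeff_nonneg (n-1) (fun h => (d h).im)
        (Filter.Eventually.of_forall fun s => le_of_eq (himz s).symm)
    have h4 : 0 ≤ -(d (n-1)).im := by
      refine top_coeff_nonneg (n-1) (fun h => -(d h).im)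
        (Filter.Eventually.of_forall fun s => ?_)
      have := himz s
      rw [← neg_eq_zero] at this
      rw [← this, ← Finset.sum_neg_distrib]
      refine le_of_eq (Finset.sum_congr rfl fun k hk => by ring).symm
    have hd0 : d (n-1) = 0 := by
      have : (d (n-1)).re = 0 := le_antisymm (by linarith) h1
      have h' : (d (n-1)).im = 0 := le_antisymm (by linarith) h3
      exact Complex.ext this h'
    -- extract α = 0
    have hI0 : (Complex.I : ℂ) ^ (n-1) ≠ 0 := pow_ne_zero _ Complex.I_ne_zero
    have hf0 : (((n-1).factorial : ℂ))⁻¹ ≠ 0 :=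
      inv_ne_zero (Nat.cast_ne_zero.mpr (n-1).factorial_ne_zero)
    have := hd0
    rw [hd] at this
    simp only at this
    rcases mul_eq_zero.mp this with h' | h'
    · exact absurd h' (mul_ne_zero hI0 hf0)
    · exact h'
  -- conclude the operator is zero
  have := (inner_map_self_eq_zero ((SOp B T (n-1)) : H →ₗ[ℂ] H)).mp (fun x => hq x)
  ext x
  have hx := congrArg (fun (f : H →ₗ[ℂ] H) => f x) this
  simpa using hx
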